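/- arXiv:1805.07172 — 3 statements merged into one kernel-verified Lean document; each statement's English description precedes it below -/
import Mathlib

section
/- Every involution in a finite Coxeter group can be written as a product of pairwise commuting reflections. -/
open scoped RealInnerProductSpace

/-- An (orthogonal) reflection of a real inner product space: an involution whose
`(-1)`-eigenspace is one-dimensional (i.e. it fixes a hyperplane pointwise). -/
def IsOrthoReflection {V : Type*} [NormedAddCommGroup V] [InnerProductSpace ℝ V]
    (g : V ≃ₗᵢ[ℝ] V) : Prop :=
  g ^ 2 = 1 ∧
    Module.finrank ℝ (Module.End.eigenspace (g.toLinearEquiv : V →ₗ[ℝ] V) (-1)) = 1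

namespace CarterAux

variable {V : Type*} [NormedAddCommGroup V] [InnerProductSpace ℝ V]

/-- `r` is the orthogonal reflection with unit root `a`. -/
def IsRefl (r : V ≃ₗᵢ[ℝ] V) (a : V) : Prop :=
  ‖a‖ = 1 ∧ ∀ v, r v = v - (2 * ⟪a, v⟫) • a

namespace IsRefl

variable {r s w : V ≃ₗᵢ[ℝ] V} {a b v : V}

lemma norm_eq (h : IsRefl r a) : ‖a‖ = 1 := h.1
lemma apply (h : IsRefl r a) (v : V) : r v = v - (2 * ⟪a, v⟫) • a := h.2 v

lemma ne_zero (h : IsRefl r a) : a ≠ 0 := by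
  intro h0
  have := h.1
  rw [h0, norm_zero] at this
  exact one_ne_zero this.symm

lemma inner_self (h : IsRefl r a) : ⟪a, a⟫ = 1 := by
  rw [real_inner_self_eq_norm_sq, h.norm_eq]; norm_num

lemma apply_self (h : IsRefl r a) : r a = -a := by
  rw [h.apply, h.inner_self]; module

lemma apply_orth (h : IsRefl r a) (hv : ⟪a, v⟫ = 0) : r v = v := by
  rw [h.apply, hv]; module

lemma invol (h : IsRefl r a) (v : V) : r (r v) = v := by
  rw [h.apply v, h.apply, inner_sub_right, real_inner_smul_right, h.inner_self]
  module

lemma mul_self (h : IsRefl r a) : r * r = 1 :=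
  LinearIsometryEquiv.toLinearEquiv_injective (LinearEquiv.toLinearMap_injective
    (LinearMap.ext fun v => h.invol v))

lemma sq_eq_one (h : IsRefl r a) : r ^ 2 = 1 := by rw [pow_two]; exact h.mul_self

lemma inv_eq (h : IsRefl r a) : r⁻¹ = r := by
  rw [inv_eq_iff_mul_eq_one]; exact h.mul_self

lemma neg (h : IsRefl r a) : IsRefl r (-a) := by
  refine ⟨by rw [norm_neg, h.norm_eq], fun v => ?_⟩
  rw [h.apply v, inner_neg_left]
  module

lemma mem_span (h : IsRefl r a) (hv : r v = -v) : v ∈ Submodule.span ℝ {a} := by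
  rw [Submodule.mem_span_singleton]
  refine ⟨⟪a, v⟫, ?_⟩
  have := h.apply v
  rw [hv] at this
  linear_combination (norm := module) ((2⁻¹:ℝ)) • this

lemma eq_of_root (h1 : IsRefl r a) (h2 : IsRefl s a) : r = s :=
  LinearIsometryEquiv.toLinearEquiv_injective (LinearEquiv.toLinearMap_injective
    (LinearMap.ext fun v => by rw [show r.toLinearEquiv.toLinearMap v = r v from rfl,
      show s.toLinearEquiv.toLinearMap v = s v from rfl, h1.apply, h2.apply]))

lemma conj (h : IsRefl r a) (w : V ≃ₗᵢ[ℝ] V) : IsRefl (w * r * w⁻¹) (w a) := by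
  refine ⟨by rw [w.norm_map, h.norm_eq], fun v => ?_⟩
  have : (w * r * w⁻¹) v = w (r (w⁻¹ v)) := rfl
  have hw : ⟪a, w⁻¹ v⟫ = ⟪w a, v⟫ := by
    rw [← w.inner_map_map a (w⁻¹ v)]
    congr 1
    exact w.apply_symm_apply v
  rw [this, h.apply, map_sub, map_smul, hw, show w (w⁻¹ v) = v from w.apply_symm_apply v]

lemma root_eq (h1 : IsRefl r a) (h2 : IsRefl r b) : b = a ∨ b = -a := by
  have hb : b ∈ Submodule.span ℝ {a} := h1.mem_span h2.apply_self
  rw [Submodule.mem_span_singleton] at hb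
  obtain ⟨t, rfl⟩ := hb
  have ht : |t| = 1 := by
    have := h2.norm_eq
    rw [norm_smul, Real.norm_eq_abs, h1.norm_eq, mul_one] at this
    exact this
  rcases abs_eq (by norm_num : (0:ℝ) ≤ 1) |>.mp ht with h | h
  · left; rw [h, one_smul]
  · right; rw [h]; module

end IsRefl

lemma ext' {e f : V ≃ₗᵢ[ℝ] V} (h : ∀ v, e v = f v) : e = f :=
  LinearIsometryEquiv.toLinearEquiv_injective (LinearEquiv.toLinearMap_injective
    (LinearMap.ext h))

namespace IsRefl

variable {r s w : V ≃ₗᵢ[ℝ] V} {a b v : V}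

lemma isOrtho (h : IsRefl r a) : IsOrthoReflection r := by
  refine ⟨h.sq_eq_one, ?_⟩
  have hspan : Module.End.eigenspace (r.toLinearEquiv : V →ₗ[ℝ] V) (-1)
      = Submodule.span ℝ {a} := by
    apply le_antisymm
    · intro v hv
      rw [Module.End.mem_eigenspace_iff] at hv
      have hv' : r v = -v := by
        have : (r.toLinearEquiv : V →ₗ[ℝ] V) v = r v := rfl
        rw [this] at hv; rw [hv]; module
      exact h.mem_span hv'
    · rw [Submodule.span_le, Set.singleton_subset_iff, SetLike.mem_coe,
        Module.End.mem_eigenspace_iff]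
      show r a = (-1 : ℝ) • a
      rw [h.apply_self]; module
  rw [hspan]; exact finrank_span_singleton h.ne_zero

lemma commute_of_orth (h1 : IsRefl r a) (h2 : IsRefl s b) (hab : ⟪a, b⟫ = 0) :
    Commute r s := by
  have hba : ⟪b, a⟫ = 0 := by rw [real_inner_comm]; exact hab
  apply ext'
  intro v
  have e1 : (r * s) v = r (s v) := rfl
  have e2 : (s * r) v = s (r v) := rfl
  have hsv : s v = v - (2*⟪b,v⟫)•b := h2.apply v
  have hrv : r v = v - (2*⟪a,v⟫)•a := h1.apply v
  have hasv : ⟪a, s v⟫ = ⟪a, v⟫ := by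
    rw [hsv, inner_sub_right, real_inner_smul_right, hab]; ring
  have hbrv : ⟪b, r v⟫ = ⟪b, v⟫ := by
    rw [hrv, inner_sub_right, real_inner_smul_right, hba]; ring
  rw [e1, e2, h1.apply (s v), hasv, hsv, h2.apply (r v), hbrv, hrv]
  module

end IsRefl

lemma exists_isRefl_of_ortho [FiniteDimensional ℝ V] {r : V ≃ₗᵢ[ℝ] V}
    (h : IsOrthoReflection r) : ∃ a, IsRefl r a := by
  obtain ⟨hsq, hrk⟩ := h
  set E := Module.End.eigenspace (r.toLinearEquiv : V →ₗ[ℝ] V) (-1) with hE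
  have hdouble : ∀ u, r (r u) = u := by
    intro u
    have := congrArg (fun e : V ≃ₗᵢ[ℝ] V => e u) hsq
    simpa [pow_succ] using this
  have hbot : E ≠ ⊥ := by
    intro hb; rw [hb] at hrk; simp at hrk
  obtain ⟨v0, hv0E, hv0⟩ := Submodule.ne_bot_iff E |>.mp hbot
  have hv0' : r v0 = -v0 := by
    rw [Module.End.mem_eigenspace_iff] at hv0E
    have : (r.toLinearEquiv : V →ₗ[ℝ] V) v0 = r v0 := rfl
    rw [this] at hv0E; rw [hv0E]; module
  set a := ‖v0‖⁻¹ • v0 with ha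
  have hnorm : ‖a‖ = 1 := by
    rw [ha, norm_smul, norm_inv, norm_norm, inv_mul_cancel₀ (norm_ne_zero_iff.mpr hv0)]
  have haE : a ∈ E := by
    rw [Module.End.mem_eigenspace_iff]
    show r a = (-1 : ℝ) • a
    rw [ha, map_smul, hv0']
    module
  have hane : a ≠ 0 := by
    intro h0; rw [h0, norm_zero] at hnorm; exact one_ne_zero hnorm.symm
  have hEspan : E = Submodule.span ℝ {a} := by
    refine (Submodule.eq_of_le_of_finrank_le ?_ ?_).symm
    · rw [Submodule.span_le, Set.singleton_subset_iff]; exact haE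
    · rw [hrk, finrank_span_singleton hane]
  have hra : r a = -a := by
    rw [Module.End.mem_eigenspace_iff] at haE
    have : (r.toLinearEquiv : V →ₗ[ℝ] V) a = r a := rfl
    rw [this] at haE; rw [haE]; module
  refine ⟨a, hnorm, fun u => ?_⟩
  set x := u - r u with hx
  have hxE : x ∈ E := by
    rw [Module.End.mem_eigenspace_iff]
    show r x = (-1 : ℝ) • x
    rw [hx, map_sub, hdouble]
    module
  rw [hEspan, Submodule.mem_span_singleton] at hxE
  obtain ⟨t, ht⟩ := hxE
  have hinner : ⟪a, x⟫ = 2 * ⟪a, u⟫ := by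
    have h1 : ⟪a, r u⟫ = -⟪a, u⟫ := by
      have h2 := r.inner_map_map a u
      rw [hra, inner_neg_left] at h2
      linarith
    rw [hx, inner_sub_right, h1]; ring
  have haa : ⟪a, a⟫ = 1 := by
    rw [real_inner_self_eq_norm_sq, hnorm]; norm_num
  have ht' : t = 2 * ⟪a, u⟫ := by
    rw [← hinner, ← ht, real_inner_smul_right, haa, mul_one]
  have : u - r u = (2 * ⟪a, u⟫) • a := by rw [← ht', ht]
  linear_combination (norm := module) -this



section Invol

variable {g : V ≃ₗᵢ[ℝ] V}

lemma double (hg : g ^ 2 = 1) (v : V) : g (g v) = v := by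
  have := congrArg (fun e : V ≃ₗᵢ[ℝ] V => e v) hg
  simpa [pow_succ] using this

lemma inv_self (hg : g ^ 2 = 1) : g⁻¹ = g := by
  rw [inv_eq_iff_mul_eq_one, ← pow_two]; exact hg

lemma inner_g_right (hg : g ^ 2 = 1) (x y : V) : ⟪x, g y⟫ = ⟪g x, y⟫ := by
  conv_lhs => rw [← g.inner_map_map x (g y)]
  rw [double hg]

/-- The fixed subspace of `g`. -/
def fixSp (g : V ≃ₗᵢ[ℝ] V) : Submodule ℝ V where
  carrier := {v | g v = v}
  add_mem' := by intro x y hx hy; simp only [Set.mem_setOf_eq, map_add] at *; rw [hx, hy]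
  zero_mem' := by simp
  smul_mem' := by intro c x hx; simp only [Set.mem_setOf_eq, map_smul] at *; rw [hx]

/-- The `(-1)`-subspace of `g`. -/
def negSp (g : V ≃ₗᵢ[ℝ] V) : Submodule ℝ V where
  carrier := {v | g v = -v}
  add_mem' := by
    intro x y hx hy; simp only [Set.mem_setOf_eq, map_add] at *; rw [hx, hy]; abel
  zero_mem' := by simp
  smul_mem' := by
    intro c x hx; simp only [Set.mem_setOf_eq, map_smul] at *; rw [hx, smul_neg]

@[simp] lemma mem_fixSp {v : V} : v ∈ fixSp g ↔ g v = v := Iff.rfl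
@[simp] lemma mem_negSp {v : V} : v ∈ negSp g ↔ g v = -v := Iff.rfl

lemma exists_neg_of_ne_one (hg : g ^ 2 = 1) (hne : g ≠ 1) : ∃ v, v ≠ 0 ∧ g v = -v := by
  have : ∃ v, g v ≠ v := by
    by_contra hc
    push_neg at hc
    exact hne (ext' fun v => (hc v).trans rfl)
  obtain ⟨v0, hv0⟩ := this
  refine ⟨v0 - g v0, fun h0 => hv0 ?_, ?_⟩
  · have := sub_eq_zero.mp h0; exact this.symm
  · rw [map_sub, double hg]; abel

lemma g_neg_of_orth_fix (hg : g ^ 2 = 1) {aa : V} (h : ∀ x, g x = x → ⟪aa, x⟫ = 0) :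
    g aa = -aa := by
  set ap := (2⁻¹ : ℝ) • (aa + g aa) with hap
  have hfix : g ap = ap := by
    rw [hap, map_smul, map_add, double hg]; rw [add_comm]
  have h1 : ⟪aa, ap⟫ = 0 := h ap hfix
  have h2 : ⟪g aa, ap⟫ = 0 := by
    have h2' := g.inner_map_map aa ap
    rw [hfix] at h2'
    rw [h2']; exact h1
  have h3 : ⟪ap, ap⟫ = 0 := by
    rw [hap, real_inner_smul_left, inner_add_left, h1, h2]
    ring
  have h4 : ap = 0 := by
    have := inner_self_eq_zero (𝕜 := ℝ) (x := ap)
    exact this.mp h3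
  have h5 : aa + g aa = 0 := by
    have h6 : (2 : ℝ) • ap = aa + g aa := by
      rw [hap, smul_smul]; norm_num
    rw [← h6, h4, smul_zero]
  linear_combination (norm := module) h5

end Invol

/-- `a` is a (unit) root of the reflection group `W`. -/
def IsRoot (W : Subgroup (V ≃ₗᵢ[ℝ] V)) (a : V) : Prop := ∃ r, r ∈ W ∧ IsRefl r a

lemma IsRoot.neg {W : Subgroup (V ≃ₗᵢ[ℝ] V)} {a : V} (h : IsRoot W a) : IsRoot W (-a) := by
  obtain ⟨r, hr, hra⟩ := h
  exact ⟨r, hr, hra.neg⟩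

lemma IsRoot.norm_eq {W : Subgroup (V ≃ₗᵢ[ℝ] V)} {a : V} (h : IsRoot W a) : ‖a‖ = 1 := by
  obtain ⟨r, hr, hra⟩ := h; exact hra.norm_eq

lemma IsRoot.map {W : Subgroup (V ≃ₗᵢ[ℝ] V)} {a : V} (h : IsRoot W a) {w : V ≃ₗᵢ[ℝ] V}
    (hw : w ∈ W) : IsRoot W (w a) := by
  obtain ⟨r, hr, hra⟩ := h
  exact ⟨w * r * w⁻¹, mul_mem (mul_mem hw hr) (inv_mem hw), hra.conj w⟩

lemma isRoot_finite (W : Subgroup (V ≃ₗᵢ[ℝ] V)) (hfin : Finite W) :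
    {a : V | IsRoot W a}.Finite := by
  have hWfin : (W : Set (V ≃ₗᵢ[ℝ] V)).Finite := W.carrier.toFinite
  have hsub : {a : V | IsRoot W a} ⊆ ⋃ r ∈ (W : Set (V ≃ₗᵢ[ℝ] V)), {a : V | IsRefl r a} := by
    intro a ⟨r, hr, hra⟩
    exact Set.mem_biUnion hr hra
  refine Set.Finite.subset (Set.Finite.biUnion hWfin fun r _ => ?_) hsub
  by_cases hr : ∃ b, IsRefl r b
  · obtain ⟨b, hb⟩ := hr
    refine Set.Finite.subset (Set.Finite.insert b (Set.finite_singleton (-b))) ?_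
    intro a ha
    rcases hb.root_eq ha with h | h
    · rw [h]; exact Set.mem_insert _ _
    · rw [h]; exact Set.mem_insert_of_mem _ rfl
  · have : {a : V | IsRefl r a} = ∅ := by
      ext a; simp only [Set.mem_setOf_eq, Set.mem_empty_iff_false, iff_false]
      exact fun ha => hr ⟨a, ha⟩
    rw [this]; exact Set.finite_empty

/-- Generic point avoiding finitely many hyperplanes, within a subspace. -/
lemma exists_regular (s : Finset V) (U : Submodule ℝ V)
    (h : ∀ a ∈ s, ∃ x ∈ U, ⟪a, x⟫ ≠ 0) : ∃ p ∈ U, ∀ a ∈ s, ⟪a, p⟫ ≠ 0 := by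
  classical
  induction s using Finset.induction_on with
  | empty => exact ⟨0, U.zero_mem, by simp⟩
  | @insert a s ha ih =>
    obtain ⟨u, hu, hus⟩ := ih (fun b hb => h b (Finset.mem_insert_of_mem hb))
    obtain ⟨x, hx, hax⟩ := h a (Finset.mem_insert_self a s)
    set bad : Set ℝ := ⋃ b ∈ (insert a s : Finset V), {t : ℝ | ⟪b, u⟫ + t * ⟪b, x⟫ = 0}
      with hbad
    have hbadfin : bad.Finite := by
      refine Set.Finite.biUnion (insert a s).finite_toSet fun b hb => ?_
      by_cases hbx : ⟪b, x⟫ = 0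
      · have hbu : ⟪b, u⟫ ≠ 0 := by
          rcases Finset.mem_insert.mp hb with rfl | hbs
          · exact absurd hbx hax
          · exact hus b hbs
        have : {t : ℝ | ⟪b, u⟫ + t * ⟪b, x⟫ = 0} = ∅ := by
          ext t; simp only [Set.mem_setOf_eq, Set.mem_empty_iff_false, iff_false, hbx, mul_zero,
            add_zero]
          exact hbu
        rw [this]; exact Set.finite_empty
      · refine Set.Finite.subset (Set.finite_singleton (-⟪b, u⟫ / ⟪b, x⟫)) ?_
        intro t ht
        simp only [Set.mem_setOf_eq] at ht
        simp only [Set.mem_singleton_iff]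
        field_simp
        linarith
    obtain ⟨t, ht⟩ := hbadfin.infinite_compl.nonempty
    refine ⟨u + t • x, U.add_mem hu (U.smul_mem t hx), fun b hb => ?_⟩
    rw [inner_add_right, real_inner_smul_right]
    intro h0
    exact ht (Set.mem_biUnion hb h0)


section PosSystem

open scoped Classical

variable {W : Subgroup (V ≃ₗᵢ[ℝ] V)} {p : V} {P D : Finset V}

/-- membership in the nonnegative cone spanned by a finite set -/
def InCone (D : Finset V) (x : V) : Prop :=
  ∃ c : V → ℝ, (∀ d ∈ D, 0 ≤ c d) ∧ x = ∑ d ∈ D, c d • d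

lemma incone_mem {x : V} (hx : x ∈ D) : InCone D x := by
  classical
  refine ⟨fun d => if d = x then 1 else 0, fun d _ => by positivity, ?_⟩
  have h1 : ∀ d ∈ D, (if d = x then (1:ℝ) else 0) • d = (if d = x then d else 0) := by
    intro d _; split <;> simp_all
  rw [Finset.sum_congr rfl h1, Finset.sum_ite_eq' D x (fun d => d), if_pos hx]

lemma incone_smul {x : V} {t : ℝ} (ht : 0 ≤ t) (hx : InCone D x) : InCone D (t • x) := by
  obtain ⟨c, hc, hcx⟩ := hx
  refine ⟨fun d => t * c d, fun d hd => mul_nonneg ht (hc d hd), ?_⟩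
  rw [hcx, Finset.smul_sum]
  exact Finset.sum_congr rfl fun d _ => by rw [smul_smul]

lemma incone_subst {β : V} (hβ : β ∈ D) (hcone : InCone (D.erase β) β)
    {x : V} (hx : InCone D x) : InCone (D.erase β) x := by
  obtain ⟨c, hc, hcx⟩ := hx
  obtain ⟨e, he, heβ⟩ := hcone
  refine ⟨fun d => c d + c β * e d, fun d hd =>
    add_nonneg (hc d (Finset.mem_of_mem_erase hd)) (mul_nonneg (hc β hβ) (he d hd)), ?_⟩
  have hstep : ∀ t : ℝ, t • β = ∑ d ∈ D.erase β, (t * e d) • d := by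
    intro t
    conv_lhs => rw [heβ]
    rw [Finset.smul_sum]
    exact Finset.sum_congr rfl fun d _ => smul_smul _ _ _
  rw [hcx, ← Finset.sum_erase_add D _ hβ, hstep (c β), ← Finset.sum_add_distrib]
  exact Finset.sum_congr rfl fun d _ => by rw [add_smul]

/-- pairing a cone combination with `p` -/
lemma inner_sum_smul (D : Finset V) (c : V → ℝ) (y : V) :
    ⟪∑ d ∈ D, c d • d, y⟫ = ∑ d ∈ D, c d * ⟪d, y⟫ := by
  rw [sum_inner]
  exact Finset.sum_congr rfl fun d _ => real_inner_smul_left d y (c d)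

lemma coeff_eq_zero_of_sum_eq_zero {c : V → ℝ} (hc : ∀ d ∈ D, 0 ≤ c d)
    (hD : ∀ d ∈ D, 0 < ⟪d, p⟫) (hsum : (∑ d ∈ D, c d • d) = 0) : ∀ d ∈ D, c d = 0 := by
  have h0 : ∑ d ∈ D, c d * ⟪d, p⟫ = 0 := by
    rw [← inner_sum_smul, hsum, inner_zero_left]
  have hterms := (Finset.sum_eq_zero_iff_of_nonneg
    (fun d hd => mul_nonneg (hc d hd) (le_of_lt (hD d hd)))).mp h0
  intro d hd
  have := hterms d hd
  rcases mul_eq_zero.mp this with h | h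
  · exact h
  · exact absurd h (ne_of_gt (hD d hd))

lemma sum_ite_smul (D : Finset V) {y : V} (hy : y ∈ D) (c : ℝ) :
    ∑ x ∈ D, (if x = y then c else 0) • x = c • y := by
  have h1 : ∀ x ∈ D, (if x = y then c else 0) • x = (if x = y then c • x else 0) := by
    intro x _; split <;> simp
  rw [Finset.sum_congr rfl h1, Finset.sum_ite_eq' D y (fun x => c • x), if_pos hy]

variable (hreg : ∀ a, IsRoot W a → ⟪a, p⟫ ≠ 0)
    (hPr : ∀ a ∈ P, IsRoot W a) (hPpos : ∀ a ∈ P, 0 < ⟪a, p⟫)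
    (hPcomp : ∀ a, IsRoot W a → 0 < ⟪a, p⟫ → a ∈ P)
    (hDP : D ⊆ P) (hDcone : ∀ x ∈ P, InCone D x)
    (hDmin : ∀ β ∈ D, ¬ (∀ x ∈ P, InCone (D.erase β) x))

include hreg hPr hPpos hPcomp hDP hDcone hDmin in
lemma obtuse {α β : V} (hα : α ∈ D) (hβ : β ∈ D) (hne : α ≠ β) : ⟪α, β⟫ ≤ 0 := by
  by_contra hpos
  push_neg at hpos
  obtain ⟨r, hrW, hr⟩ := hPr α (hDP hα)
  set c : ℝ := 2 * ⟪α, β⟫ with hc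
  have hcpos : 0 < c := by positivity
  have hγroot : IsRoot W (r β) := (hPr β (hDP hβ)).map hrW
  have hγ : r β = β - c • α := hr.apply β
  have hβp : 0 < ⟪β, p⟫ := hPpos β (hDP hβ)
  have hαp : 0 < ⟪α, p⟫ := hPpos α (hDP hα)
  rcases (hreg _ hγroot).lt_or_gt with hnegγ | hposγ
  · -- r β negative: η := -(r β) ∈ P
    have hηroot : IsRoot W (-(r β)) := hγroot.neg
    have hηpos : 0 < ⟪-(r β), p⟫ := by rw [inner_neg_left]; linarith
    have hηP : -(r β) ∈ P := hPcomp _ hηroot hηpos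
    obtain ⟨d, hd, hdx⟩ := hDcone _ hηP
    have hkey : c • α = β + ∑ x ∈ D, d x • x := by
      linear_combination (norm := module) hγ + hdx
    have hsplit := Finset.sum_erase_add D (fun x => d x • x) hα
    set k := d α with hk
    have hknn : 0 ≤ k := hd α hα
    by_cases hkc : k < c
    · -- α in cone of the rest: contradiction with minimality
      have hβe : β ∈ D.erase α := Finset.mem_erase.mpr ⟨hne.symm, hβ⟩
      have hcomb : (c - k) • α
          = ∑ x ∈ D.erase α, (d x + if x = β then (1:ℝ) else 0) • x := by
        have hite := sum_ite_smul (D.erase α) hβe (1:ℝ)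
        have hdistr : ∑ x ∈ D.erase α, (d x + if x = β then (1:ℝ) else 0) • x
            = (∑ x ∈ D.erase α, d x • x)
              + ∑ x ∈ D.erase α, (if x = β then (1:ℝ) else 0) • x := by
          rw [← Finset.sum_add_distrib]
          exact Finset.sum_congr rfl fun x _ => add_smul _ _ _
        rw [hdistr, hite]
        have h2 : ∑ x ∈ D.erase α, d x • x + d α • α = ∑ x ∈ D, d x • x := hsplit
        linear_combination (norm := module) hkey - h2
      have hconeα : InCone (D.erase α) α := by
        have h3 : InCone (D.erase α) ((c - k) • α) := by
          refine ⟨fun x => d x + if x = β then (1:ℝ) else 0, fun x hx => ?_, hcomb⟩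
          have := hd x (Finset.mem_of_mem_erase hx)
          show 0 ≤ d x + if x = β then (1:ℝ) else 0
          split <;> linarith
        have h4 := incone_smul (t := (c - k)⁻¹) (inv_nonneg.mpr (by linarith)) h3
        rwa [smul_smul, inv_mul_cancel₀ (by linarith), one_smul] at h4
      exact hDmin α hα (fun x hx => incone_subst hα hconeα (hDcone x hx))
    · -- k ≥ c: positivity contradiction
      push_neg at hkc
      have hip := congrArg (fun v => ⟪v, p⟫) hkey
      simp only [inner_add_left, inner_sum_smul, real_inner_smul_left] at hip
      have hsplitp := Finset.sum_erase_add D (fun x => d x * ⟪x, p⟫) hα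
      have hnn : 0 ≤ ∑ x ∈ D.erase α, d x * ⟪x, p⟫ := by
        refine Finset.sum_nonneg fun x hx => mul_nonneg (hd x (Finset.mem_of_mem_erase hx)) ?_
        exact (hPpos x (hDP (Finset.mem_of_mem_erase hx))).le
      have hmul : c * ⟪α, p⟫ ≤ k * ⟪α, p⟫ := mul_le_mul_of_nonneg_right hkc hαp.le
      have hsp2 : ∑ x ∈ D.erase α, d x * ⟪x, p⟫ + k * ⟪α, p⟫ = ∑ x ∈ D, d x * ⟪x, p⟫ :=
        hsplitp
      rw [← hsp2] at hip
      linarith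
  · -- r β positive: r β ∈ P
    have hγP : r β ∈ P := hPcomp _ hγroot hposγ
    obtain ⟨d, hd, hdx⟩ := hDcone _ hγP
    have hkey : β = (∑ x ∈ D, d x • x) + c • α := by
      linear_combination (norm := module) hdx - hγ
    have hsplit := Finset.sum_erase_add D (fun x => d x • x) hβ
    set k := d β with hk
    have hknn : 0 ≤ k := hd β hβ
    by_cases hk1 : k < 1
    · have hαe : α ∈ D.erase β := Finset.mem_erase.mpr ⟨hne, hα⟩
      have hcomb : (1 - k) • β
          = ∑ x ∈ D.erase β, (d x + if x = α then c else 0) • x := by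
        have hite := sum_ite_smul (D.erase β) hαe c
        have hdistr : ∑ x ∈ D.erase β, (d x + if x = α then c else 0) • x
            = (∑ x ∈ D.erase β, d x • x)
              + ∑ x ∈ D.erase β, (if x = α then c else 0) • x := by
          rw [← Finset.sum_add_distrib]
          exact Finset.sum_congr rfl fun x _ => add_smul _ _ _
        rw [hdistr, hite]
        have h2 : ∑ x ∈ D.erase β, d x • x + d β • β = ∑ x ∈ D, d x • x := hsplit
        linear_combination (norm := module) hkey - h2
      have hconeβ : InCone (D.erase β) β := by
        have h3 : InCone (D.erase β) ((1 - k) • β) := by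
          refine ⟨fun x => d x + if x = α then c else 0, fun x hx => ?_, hcomb⟩
          have := hd x (Finset.mem_of_mem_erase hx)
          show 0 ≤ d x + if x = α then c else 0
          split <;> linarith
        have h4 := incone_smul (t := (1 - k)⁻¹) (inv_nonneg.mpr (by linarith)) h3
        rwa [smul_smul, inv_mul_cancel₀ (by linarith), one_smul] at h4
      exact hDmin β hβ (fun x hx => incone_subst hβ hconeβ (hDcone x hx))
    · push_neg at hk1
      have hip := congrArg (fun v => ⟪v, p⟫) hkey
      simp only [inner_add_left, inner_sum_smul, real_inner_smul_left] at hip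
      have hsplitp := Finset.sum_erase_add D (fun x => d x * ⟪x, p⟫) hβ
      have hnn : 0 ≤ ∑ x ∈ D.erase β, d x * ⟪x, p⟫ := by
        refine Finset.sum_nonneg fun x hx => mul_nonneg (hd x (Finset.mem_of_mem_erase hx)) ?_
        exact (hPpos x (hDP (Finset.mem_of_mem_erase hx))).le
      have hmul : ⟪β, p⟫ ≤ k * ⟪β, p⟫ := le_mul_of_one_le_left hβp.le hk1
      have hcα : 0 < c * ⟪α, p⟫ := mul_pos hcpos hαp
      have hsp2 : ∑ x ∈ D.erase β, d x * ⟪x, p⟫ + k * ⟪β, p⟫ = ∑ x ∈ D, d x * ⟪x, p⟫ :=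
        hsplitp
      rw [← hsp2] at hip
      linarith

include hreg hPr hPpos hPcomp hDP hDcone hDmin in
lemma refl_simple_pos {α β : V} (hα : α ∈ D) (hβ : β ∈ P) (hne : β ≠ α)
    {rα : V ≃ₗᵢ[ℝ] V} (hrα : IsRefl rα α) : 0 < ⟪rα β, p⟫ := by
  obtain ⟨r0, hr0W, hr0⟩ := hPr α (hDP hα)
  have hrαW : rα ∈ W := by rw [hrα.eq_of_root hr0]; exact hr0W
  have happ : rα β = β - (2 * ⟪α, β⟫) • α := hrα.apply β
  have hβp := hPpos β hβ
  have hαp := hPpos α (hDP hα)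
  set c : ℝ := 2 * ⟪α, β⟫ with hc
  have hγroot : IsRoot W (rα β) := (hPr β hβ).map hrαW
  rcases (hreg _ hγroot).lt_or_gt with hneg | hpos
  swap
  · exact hpos
  exfalso
  have hipγ : ⟪rα β, p⟫ = ⟪β, p⟫ - c * ⟪α, p⟫ := by
    rw [happ, inner_sub_left, real_inner_smul_left]
  have hcpos : 0 < c := by
    by_contra hcn
    push_neg at hcn
    have : c * ⟪α, p⟫ ≤ 0 := mul_nonpos_of_nonpos_of_nonneg hcn hαp.le
    linarith
  have hηP : -(rα β) ∈ P := hPcomp _ hγroot.neg (by rw [inner_neg_left]; linarith)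
  obtain ⟨b, hb, hbx⟩ := hDcone β hβ
  obtain ⟨h, hh, hhx⟩ := hDcone _ hηP
  have hkey : ∑ x ∈ D, (b x + h x) • x = c • α := by
    have hdistr : ∑ x ∈ D, (b x + h x) • x = (∑ x ∈ D, b x • x) + ∑ x ∈ D, h x • x := by
      rw [← Finset.sum_add_distrib]
      exact Finset.sum_congr rfl fun x _ => add_smul _ _ _
    rw [hdistr]
    linear_combination (norm := module) -hbx - hhx - happ
  -- pair with α
  have hipα := congrArg (fun v => ⟪v, α⟫) hkey
  simp only [inner_sum_smul, real_inner_smul_left] at hipα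
  have hαα : ⟪α, α⟫ = 1 := hrα.inner_self
  set kk := b α + h α with hkk
  have hsplitα : ∑ x ∈ D.erase α, (b x + h x) * ⟪x, α⟫ + kk * ⟪α, α⟫
      = ∑ x ∈ D, (b x + h x) * ⟪x, α⟫ :=
    Finset.sum_erase_add D (fun x => (b x + h x) * ⟪x, α⟫) hα
  have hnp : ∑ x ∈ D.erase α, (b x + h x) * ⟪x, α⟫ ≤ 0 := by
    refine Finset.sum_nonpos fun x hx => ?_
    have hxD := Finset.mem_of_mem_erase hx
    have hxa : x ≠ α := (Finset.mem_erase.mp hx).1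
    have hobt := obtuse hreg hPr hPpos hPcomp hDP hDcone hDmin hxD hα hxa
    exact mul_nonpos_of_nonneg_of_nonpos (add_nonneg (hb x hxD) (hh x hxD)) hobt
  have hkkc : c ≤ kk := by
    rw [hαα, mul_one] at hipα
    rw [hαα, mul_one] at hsplitα
    linarith
  -- pair with p
  have hipp := congrArg (fun v => ⟪v, p⟫) hkey
  simp only [inner_sum_smul, real_inner_smul_left] at hipp
  have hsplitp : ∑ x ∈ D.erase α, (b x + h x) * ⟪x, p⟫ + kk * ⟪α, p⟫
      = ∑ x ∈ D, (b x + h x) * ⟪x, p⟫ :=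
    Finset.sum_erase_add D (fun x => (b x + h x) * ⟪x, p⟫) hα
  have hsumnn : 0 ≤ ∑ x ∈ D.erase α, (b x + h x) * ⟪x, p⟫ := by
    refine Finset.sum_nonneg fun x hx => ?_
    have hxD := Finset.mem_of_mem_erase hx
    exact mul_nonneg (add_nonneg (hb x hxD) (hh x hxD)) (hPpos x (hDP hxD)).le
  have hkkmul : c * ⟪α, p⟫ ≤ kk * ⟪α, p⟫ := mul_le_mul_of_nonneg_right hkkc hαp.le
  have hsum0 : ∑ x ∈ D.erase α, (b x + h x) * ⟪x, p⟫ = 0 := by linarith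
  have hzero : ∀ x ∈ D.erase α, (b x + h x) * ⟪x, p⟫ = 0 := by
    intro x hx
    refine (Finset.sum_eq_zero_iff_of_nonneg ?_).mp hsum0 x hx
    intro y hy
    have hyD := Finset.mem_of_mem_erase hy
    exact mul_nonneg (add_nonneg (hb y hyD) (hh y hyD)) (hPpos y (hDP hyD)).le
  have hbz : ∀ x ∈ D.erase α, b x = 0 := by
    intro x hx
    have hxD := Finset.mem_of_mem_erase hx
    have := hzero x hx
    rcases mul_eq_zero.mp this with h0 | h0
    · have hb' := hb x hxD
      have hh' := hh x hxD
      linarith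
    · exact absurd h0 (ne_of_gt (hPpos x (hDP hxD)))
  have hβα : β = b α • α := by
    rw [hbx, ← Finset.sum_erase_add D _ hα]
    have : ∑ x ∈ D.erase α, b x • x = 0 :=
      Finset.sum_eq_zero fun x hx => by rw [hbz x hx, zero_smul]
    rw [this, zero_add]
  have hβn : ‖β‖ = 1 := (hPr β hβ).norm_eq
  have hbα : b α = 1 := by
    have h1 : |b α| * ‖α‖ = 1 := by
      rw [← Real.norm_eq_abs, ← norm_smul, ← hβα, hβn]
    rw [hrα.norm_eq, mul_one] at h1
    have h2 : 0 ≤ b α := hb α hα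
    rw [abs_of_nonneg h2] at h1
    exact h1
  exact hne (by rw [hβα, hbα, one_smul])

include hreg hPr hPpos hPcomp hDP hDcone hDmin in
lemma exists_simple_conj :
    ∀ β ∈ P, ∃ w ∈ Subgroup.closure {r : V ≃ₗᵢ[ℝ] V | ∃ δ ∈ D, IsRefl r δ},
      ∃ δ ∈ D, w δ = β := by
  classical
  set gen := {r : V ≃ₗᵢ[ℝ] V | ∃ δ ∈ D, IsRefl r δ} with hgen
  set Q := fun β => ∃ w ∈ Subgroup.closure gen, ∃ δ ∈ D, w δ = β with hQ
  set B := P.filter (fun β => ¬ Q β) with hB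
  suffices hBe : B = ∅ by
    intro β hβ
    by_contra hq
    have : β ∈ B := Finset.mem_filter.mpr ⟨hβ, hq⟩
    rw [hBe] at this
    exact absurd this (Finset.notMem_empty β)
  by_contra hBne
  obtain ⟨β, hβB, hβmin⟩ := Finset.exists_min_image B (fun β => ⟪β, p⟫)
    (Finset.nonempty_of_ne_empty hBne)
  obtain ⟨hβP, hβQ⟩ := Finset.mem_filter.mp hβB
  have hβD : β ∉ D := by
    intro hβD
    exact hβQ ⟨1, one_mem _, β, hβD, rfl⟩
  have hδex : ∃ δ ∈ D, 0 < ⟪δ, β⟫ := by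
    by_contra hno
    push_neg at hno
    obtain ⟨b, hb, hbx⟩ := hDcone β hβP
    have h1 : ⟪β, β⟫ = 1 := by
      rw [real_inner_self_eq_norm_sq, (hPr β hβP).norm_eq]; norm_num
    have hip := congrArg (fun v => ⟪v, β⟫) hbx
    simp only [inner_sum_smul] at hip
    have hsumnp : ∑ x ∈ D, b x * ⟪x, β⟫ ≤ 0 :=
      Finset.sum_nonpos fun x hx => mul_nonpos_of_nonneg_of_nonpos (hb x hx) (hno x hx)
    rw [h1] at hip
    linarith
  obtain ⟨δ, hδD, hδβ⟩ := hδex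
  obtain ⟨rδ0, hrδ0W, hrδ0⟩ := hPr δ (hDP hδD)
  have hβδ : β ≠ δ := fun h => hβD (h ▸ hδD)
  have hγpos : 0 < ⟪rδ0 β, p⟫ :=
    refl_simple_pos hreg hPr hPpos hPcomp hDP hDcone hDmin hδD hβP hβδ hrδ0
  have hγroot : IsRoot W (rδ0 β) := (hPr β hβP).map hrδ0W
  have hγP : rδ0 β ∈ P := hPcomp _ hγroot hγpos
  have hγlt : ⟪rδ0 β, p⟫ < ⟪β, p⟫ := by
    rw [hrδ0.apply β, inner_sub_left, real_inner_smul_left]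
    have h2 : 0 < 2 * ⟪δ, β⟫ * ⟪δ, p⟫ :=
      mul_pos (by linarith) (hPpos δ (hDP hδD))
    linarith
  have hγQ : Q (rδ0 β) := by
    by_contra hq
    have hmem : rδ0 β ∈ B := Finset.mem_filter.mpr ⟨hγP, hq⟩
    have := hβmin _ hmem
    linarith
  obtain ⟨w, hw, δ', hδ', hwδ'⟩ := hγQ
  refine hβQ ⟨rδ0 * w, mul_mem (Subgroup.subset_closure ⟨δ, hδD, hrδ0⟩) hw, δ', hδ', ?_⟩
  show rδ0 (w δ') = β
  rw [hwδ']
  exact hrδ0.invol β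

include hreg hPr hPpos hPcomp hDP hDcone hDmin in
lemma W_le_closure (S : Set (V ≃ₗᵢ[ℝ] V)) (hS : ∀ s ∈ S, ∃ a, IsRefl s a)
    (hgenS : Subgroup.closure S = W) :
    W ≤ Subgroup.closure {r : V ≃ₗᵢ[ℝ] V | ∃ δ ∈ D, IsRefl r δ} := by
  rw [← hgenS]
  refine (Subgroup.closure_le _).mpr ?_
  intro s hs
  obtain ⟨a, ha⟩ := hS s hs
  have hsW : s ∈ W := hgenS ▸ Subgroup.subset_closure hs
  have haroot : IsRoot W a := ⟨s, hsW, ha⟩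
  have hb : ∃ b, IsRefl s b ∧ b ∈ P := by
    rcases (hreg a haroot).lt_or_gt with hneg | hpos
    · refine ⟨-a, ha.neg, hPcomp _ haroot.neg ?_⟩
      rw [inner_neg_left]; linarith
    · exact ⟨a, ha, hPcomp _ haroot hpos⟩
  obtain ⟨b, hbrefl, hbP⟩ := hb
  obtain ⟨w, hw, δ, hδ, hwδ⟩ :=
    exists_simple_conj hreg hPr hPpos hPcomp hDP hDcone hDmin b hbP
  obtain ⟨rδ, hrδW, hrδ⟩ := hPr δ (hDP hδ)
  have h1 : IsRefl (w * rδ * w⁻¹) (w δ) := hrδ.conj w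
  rw [hwδ] at h1
  have h2 : s = w * rδ * w⁻¹ := hbrefl.eq_of_root h1
  rw [h2]
  exact mul_mem (mul_mem hw (Subgroup.subset_closure ⟨δ, hδ, hrδ⟩)) (inv_mem hw)

include hreg hPr hPpos hPcomp hDP hDcone hDmin in
lemma scan (m : List (V ≃ₗᵢ[ℝ] V)) (hm : ∀ y ∈ m, ∃ δ ∈ D, IsRefl y δ)
    {α : V} {sα : V ≃ₗᵢ[ℝ] V} (hα : α ∈ D) (hsα : IsRefl sα α)
    (hneg : ⟪m.prod α, p⟫ < 0) :
    ∃ l₁ t l₂, m = l₁ ++ t :: l₂ ∧ t * l₂.prod = l₂.prod * sα := by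
  induction m with
  | nil =>
    simp only [List.prod_nil] at hneg
    have h1 : (1 : V ≃ₗᵢ[ℝ] V) α = α := rfl
    rw [h1] at hneg
    exact absurd hneg (not_lt.mpr (hPpos α (hDP hα)).le)
  | cons y m ih =>
    have hmW : m.prod ∈ W := by
      refine list_prod_mem fun y' hy' => ?_
      obtain ⟨δ', hδ', hy'δ⟩ := hm y' (List.mem_cons_of_mem _ hy')
      obtain ⟨r', hr'W, hr'⟩ := hPr δ' (hDP hδ')
      rw [hy'δ.eq_of_root hr']; exact hr'W
    have hβroot : IsRoot W (m.prod α) := (hPr α (hDP hα)).map hmW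
    have happ : (y :: m).prod α = y (m.prod α) := by rw [List.prod_cons]; rfl
    rw [happ] at hneg
    rcases (hreg _ hβroot).lt_or_gt with hβneg | hβpos
    · obtain ⟨l₁, t, l₂, hsplit, hcomm⟩ :=
        ih (fun y' hy' => hm y' (List.mem_cons_of_mem _ hy')) hβneg
      exact ⟨y :: l₁, t, l₂, by rw [hsplit]; rfl, hcomm⟩
    · obtain ⟨δy, hδy, hyδ⟩ := hm y (List.mem_cons_self (a := y) (l := m))
      have hβP : m.prod α ∈ P := hPcomp _ hβroot hβpos
      have hβeq : m.prod α = δy := by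
        by_contra hne2
        exact absurd
          (refl_simple_pos hreg hPr hPpos hPcomp hDP hDcone hDmin hδy hβP hne2 hyδ)
          (not_lt.mpr hneg.le)
      have h1 : IsRefl (m.prod * sα * m.prod⁻¹) (m.prod α) := hsα.conj m.prod
      rw [hβeq] at h1
      have h2 : y = m.prod * sα * m.prod⁻¹ := hyδ.eq_of_root h1
      refine ⟨[], y, m, rfl, ?_⟩
      rw [h2]
      group

end PosSystem

theorem myclosure_list {G : Type*} [Group G] {S : Set G} {x : G}
    (hx : x ∈ Subgroup.closure S) :
    ∃ l : List G, (∀ y ∈ l, y ∈ S ∨ y⁻¹ ∈ S) ∧ l.prod = x := by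
  have hx' : x ∈ Submonoid.closure (S ∪ S⁻¹) := by
    rw [← Subgroup.closure_toSubmonoid]; exact hx
  obtain ⟨l, h1, h2⟩ := Submonoid.exists_list_of_mem_closure hx'
  refine ⟨l, fun y hy => ?_, h2⟩
  rcases h1 y hy with h | h
  · exact Or.inl h
  · exact Or.inr (Set.mem_inv.mp h)

theorem stab_trivial (W : Subgroup (V ≃ₗᵢ[ℝ] V)) (hfin : Finite W)
    (S : Set (V ≃ₗᵢ[ℝ] V)) (hS : ∀ s ∈ S, ∃ a, IsRefl s a)
    (hgenS : Subgroup.closure S = W) (p : V)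
    (hreg : ∀ a, IsRoot W a → ⟪a, p⟫ ≠ 0)
    {w : V ≃ₗᵢ[ℝ] V} (hw : w ∈ W) (hwp : w p = p) : w = 1 := by
  classical
  set P := (isRoot_finite W hfin).toFinset.filter (fun a => 0 < ⟪a, p⟫) with hP
  have hPr : ∀ a ∈ P, IsRoot W a := fun a ha =>
    (isRoot_finite W hfin).mem_toFinset.mp (Finset.mem_filter.mp ha).1
  have hPpos : ∀ a ∈ P, 0 < ⟪a, p⟫ := fun a ha => (Finset.mem_filter.mp ha).2
  have hPcomp : ∀ a, IsRoot W a → 0 < ⟪a, p⟫ → a ∈ P := fun a h1 h2 =>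
    Finset.mem_filter.mpr ⟨(isRoot_finite W hfin).mem_toFinset.mpr h1, h2⟩
  set C := (P.powerset.filter (fun D => ∀ x ∈ P, InCone D x)) with hC
  have hPC : P ∈ C := Finset.mem_filter.mpr
    ⟨Finset.mem_powerset_self P, fun x hx => incone_mem hx⟩
  obtain ⟨D, hDC, hDmin'⟩ := Finset.exists_min_image C (fun D => D.card) ⟨P, hPC⟩
  have hDP : D ⊆ P := Finset.mem_powerset.mp (Finset.mem_filter.mp hDC).1
  have hDcone : ∀ x ∈ P, InCone D x := (Finset.mem_filter.mp hDC).2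
  have hDmin : ∀ β ∈ D, ¬ (∀ x ∈ P, InCone (D.erase β) x) := by
    intro β hβ hgood
    have hC' : D.erase β ∈ C := Finset.mem_filter.mpr
      ⟨Finset.mem_powerset.mpr ((Finset.erase_subset _ _).trans hDP), hgood⟩
    have h1 := hDmin' _ hC'
    have hlt : (D.erase β).card < D.card := Finset.card_erase_lt_of_mem hβ
    omega
  set gen := {r : V ≃ₗᵢ[ℝ] V | ∃ δ ∈ D, IsRefl r δ} with hgen
  have hwgen : w ∈ Subgroup.closure gen :=
    W_le_closure hreg hPr hPpos hPcomp hDP hDcone hDmin S hS hgenS hw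
  by_contra hw1
  have hex : ∃ n, ∃ l : List (V ≃ₗᵢ[ℝ] V),
      (∀ y ∈ l, y ∈ gen) ∧ l.length = n ∧ l.prod = w := by
    obtain ⟨l, hl, hlp⟩ := myclosure_list hwgen
    refine ⟨l.length, l, ?_, rfl, hlp⟩
    intro y hy
    rcases hl y hy with h | h
    · exact h
    · obtain ⟨δ, hδ, hrefl⟩ := h
      have h3 : y = y⁻¹ := by
        rw [← hrefl.inv_eq, inv_inv]
      rw [h3]
      exact ⟨δ, hδ, hrefl⟩
  obtain ⟨l, hlgen, hlen, hlprod⟩ := Nat.find_spec hex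
  have hn0 : l ≠ [] := by
    intro h0
    exact hw1 (by rw [← hlprod, h0, List.prod_nil])
  obtain ⟨t, ht, hlast⟩ : ∃ t, t ∈ gen ∧ l = l.dropLast ++ [t] :=
    ⟨l.getLast hn0, hlgen _ (List.getLast_mem hn0),
      (List.dropLast_append_getLast hn0).symm⟩
  obtain ⟨δt, hδt, htδ⟩ := ht
  set m := l.dropLast with hm
  have hmgen : ∀ y ∈ m, y ∈ gen := fun y hy =>
    hlgen y (by rw [hlast]; exact List.mem_append_left _ hy)
  have hprod : m.prod * t = w := by
    rw [← hlprod]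
    conv_rhs => rw [hlast]
    rw [List.prod_append, List.prod_cons, List.prod_nil, mul_one]
  have hwδ : ⟪w δt, p⟫ = ⟪δt, p⟫ := by
    conv_lhs => rw [← hwp]
    exact w.inner_map_map δt p
  have hneg : ⟪m.prod δt, p⟫ < 0 := by
    have h1 : w (t δt) = m.prod δt := by
      rw [← hprod]
      show m.prod (t (t δt)) = m.prod δt
      rw [htδ.invol δt]
    have h2 : t δt = -δt := htδ.apply_self
    rw [h2, map_neg] at h1
    rw [← h1, inner_neg_left, hwδ]
    have := hPpos δt (hDP hδt)
    linarith
  obtain ⟨l₁, t', l₂, hsplit, hcomm⟩ :=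
    scan hreg hPr hPpos hPcomp hDP hDcone hDmin m hmgen hδt htδ hneg
  have htt : t * t = 1 := htδ.mul_self
  have hnew : (l₁ ++ l₂).prod = w := by
    rw [← hprod]
    conv_rhs => rw [hsplit]
    rw [List.prod_append, List.prod_append, List.prod_cons, hcomm,
      mul_assoc, mul_assoc, htt, mul_one]
  have hnewgen : ∀ y ∈ l₁ ++ l₂, y ∈ gen := by
    intro y hy
    rcases List.mem_append.mp hy with h | h
    · exact hmgen y (by rw [hsplit]; exact List.mem_append_left _ h)
    · exact hmgen y (by rw [hsplit]; exact List.mem_append_right _ (List.mem_cons_of_mem _ h))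
  have hlenlt : (l₁ ++ l₂).length < Nat.find hex := by
    have h1 : m.length = l₁.length + (l₂.length + 1) := by
      rw [hsplit]; simp [List.length_append]
    have h2 : l.length = m.length + 1 := by
      conv_lhs => rw [hlast]
      simp
    rw [← hlen] at *
    simp only [List.length_append]
    omega
  exact absurd ⟨l₁ ++ l₂, hnewgen, rfl, hnew⟩ (Nat.find_min hex hlenlt)


section Main

variable [FiniteDimensional ℝ V]

lemma key_lemma (W : Subgroup (V ≃ₗᵢ[ℝ] V)) (hfin : Finite W)
    (S : Set (V ≃ₗᵢ[ℝ] V)) (hS : ∀ s ∈ S, ∃ a, IsRefl s a)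
    (hgenS : Subgroup.closure S = W)
    {g : V ≃ₗᵢ[ℝ] V} (hg : g ∈ W) (hinv : g ^ 2 = 1) (hne : g ≠ 1) :
    ∃ a r, IsRefl r a ∧ r ∈ W ∧ g a = -a := by
  by_contra hno
  push_neg at hno
  have hU : ∀ a, IsRoot W a → ∃ x ∈ fixSp g, ⟪a, x⟫ ≠ 0 := by
    intro a haroot
    by_contra hax
    push_neg at hax
    have hga : g a = -a := g_neg_of_orth_fix hinv (fun x hx => hax x hx)
    obtain ⟨r, hrW, hr⟩ := haroot
    exact hno a r hr hrW hga
  obtain ⟨p, hpU, hp⟩ := exists_regular (isRoot_finite W hfin).toFinset (fixSp g)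
    (fun a ha => hU a ((isRoot_finite W hfin).mem_toFinset.mp ha))
  have hreg : ∀ a, IsRoot W a → ⟪a, p⟫ ≠ 0 := fun a ha =>
    hp a ((isRoot_finite W hfin).mem_toFinset.mpr ha)
  exact hne (stab_trivial W hfin S hS hgenS p hreg hg hpU)

lemma main_aux (W : Subgroup (V ≃ₗᵢ[ℝ] V)) (hfin : Finite W)
    (S : Set (V ≃ₗᵢ[ℝ] V)) (hS : ∀ s ∈ S, ∃ a, IsRefl s a)
    (hgenS : Subgroup.closure S = W) :
    ∀ n : ℕ, ∀ g : V ≃ₗᵢ[ℝ] V, g ∈ W → g ^ 2 = 1 →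
      Module.finrank ℝ (negSp g) ≤ n →
      ∃ l : List (V ≃ₗᵢ[ℝ] V),
        (∀ s ∈ l, IsOrthoReflection s ∧ s ∈ W) ∧
        (∀ s ∈ l, ∀ v, s v = -v → v ∈ negSp g) ∧
        l.Pairwise (fun a b => Commute a b ∧ a ≠ b) ∧
        l.prod = g := by
  intro n
  induction n with
  | zero =>
    intro g hgW hginv hrk
    have hbot : negSp g = ⊥ := Submodule.finrank_eq_zero.mp (Nat.le_zero.mp hrk)
    have hg1 : g = 1 := by
      by_contra hne
      obtain ⟨v, hv0, hgv⟩ := exists_neg_of_ne_one hginv hne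
      have hmem : v ∈ negSp g := hgv
      rw [hbot, Submodule.mem_bot] at hmem
      exact hv0 hmem
    exact ⟨[], by simp, by simp, List.Pairwise.nil, by simp [hg1]⟩
  | succ n ih =>
    intro g hgW hginv hrk
    by_cases hg1 : g = 1
    · exact ⟨[], by simp, by simp, List.Pairwise.nil, by simp [hg1]⟩
    obtain ⟨a, r, hra, hrW, hga⟩ := key_lemma W hfin S hS hgenS hgW hginv hg1
    have hconj0 : IsRefl (g * r * g⁻¹) (g a) := hra.conj g
    rw [hga] at hconj0
    have hconj' : IsRefl (g * r * g⁻¹) a := by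
      have h := hconj0.neg
      rw [neg_neg] at h
      exact h
    have hcomm : g * r = r * g := by
      have h1 : g * r * g⁻¹ = r := hconj'.eq_of_root hra
      calc g * r = (g * r * g⁻¹) * g := by group
        _ = r * g := by rw [h1]
    set g' := g * r with hg'
    have hcomm2 : r * g = g * r := by rw [← hcomm, hg']
    have hg'W : g * r ∈ W := mul_mem hgW hrW
    have hg'inv : g' ^ 2 = 1 := by
      rw [pow_two, hg']
      calc g * r * (g * r) = g * (r * g) * r := by group
        _ = g * (g * r) * r := by rw [hcomm2]
        _ = (g * g) * (r * r) := by group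
        _ = 1 := by rw [hra.mul_self, ← pow_two, hginv, one_mul]
    have haa : ⟪a, a⟫ = 1 := hra.inner_self
    have horth : ∀ v, g' v = -v → (g v = -v ∧ ⟪a, v⟫ = 0) := by
      intro v hv
      have h1 : g (r v) = -v := hv
      set c := ⟪a, v⟫ with hc
      have h2 : r v = v - (2 * c) • a := hra.apply v
      have h2' : g (r v) = g v - (2 * c) • g a := by rw [h2, map_sub, map_smul]
      rw [h1, hga] at h2'
      have h3 : g v = -v - (2 * c) • a := by
        linear_combination (norm := module) -h2'
      have h4 : ⟪a, g v⟫ = -c := by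
        have h5 := g.inner_map_map a v
        rw [hga, inner_neg_left] at h5
        linarith
      have h6 : ⟪a, g v⟫ = -c - 2 * c := by
        rw [h3, inner_sub_right, inner_neg_right, real_inner_smul_right, haa]
        ring
      have hc0 : c = 0 := by linarith
      constructor
      · rw [h3, hc0]; module
      · exact hc0
    have hg'a : g' a = a := by
      show g (r a) = a
      rw [hra.apply_self, map_neg, hga, neg_neg]
    have hlt : negSp g' < negSp g := by
      rw [SetLike.lt_iff_le_and_exists]
      refine ⟨fun v hv => (horth v hv).1, a, hga, ?_⟩
      intro hmem
      have hmem' : g' a = -a := hmem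
      have heq : a = -a := by rw [hg'a] at hmem'; exact hmem' 
      have h2a : (2 : ℝ) • a = 0 := by linear_combination (norm := module) heq
      rcases smul_eq_zero.mp h2a with h | h
      · norm_num at h
      · exact hra.ne_zero h
    have hrk' : Module.finrank ℝ (negSp g') ≤ n := by
      have := Submodule.finrank_lt_finrank_of_lt hlt
      omega
    obtain ⟨l', hl'refl, hl'neg, hl'pw, hl'prod⟩ := ih g' hg'W hg'inv hrk'
    refine ⟨l' ++ [r], ?_, ?_, ?_, ?_⟩
    · intro s hs
      rcases List.mem_append.mp hs with h | h
      · exact hl'refl s h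
      · rw [List.mem_singleton.mp h]; exact ⟨hra.isOrtho, hrW⟩
    · intro s hs v hv
      rcases List.mem_append.mp hs with h | h
      · exact (horth v (hl'neg s h v hv)).1
      · rw [List.mem_singleton.mp h] at hv
        have hsp := hra.mem_span hv
        rw [Submodule.mem_span_singleton] at hsp
        obtain ⟨t, rfl⟩ := hsp
        show g (t • a) = -(t • a)
        rw [map_smul, hga, smul_neg]
    · rw [List.pairwise_append]
      refine ⟨hl'pw, List.pairwise_singleton _ _, ?_⟩
      intro x hx y hy
      rw [List.mem_singleton.mp hy]
      obtain ⟨hxrefl, hxW⟩ := hl'refl x hx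
      obtain ⟨bx, hbx⟩ := exists_isRefl_of_ortho hxrefl
      have hbxneg : g' bx = -bx := hl'neg x hx bx hbx.apply_self
      have hbxorth : ⟪a, bx⟫ = 0 := (horth bx hbxneg).2
      have hbxorth' : ⟪bx, a⟫ = 0 := by rw [real_inner_comm]; exact hbxorth
      refine ⟨hbx.commute_of_orth hra hbxorth', ?_⟩
      intro hxy
      rw [hxy] at hbx
      rcases hra.root_eq hbx with h | h
      · rw [h] at hbxorth; rw [haa] at hbxorth; norm_num at hbxorth
      · rw [h, inner_neg_right, haa] at hbxorth; norm_num at hbxorth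
    · rw [List.prod_append, List.prod_singleton, hl'prod, hg', mul_assoc,
        hra.mul_self, mul_one]

end Main

end CarterAux

/-- Every involution in a finite Coxeter group (realized via its geometric representation
as a finite group of orthogonal transformations generated by reflections) can be written
as a product of pairwise commuting reflections of the group. -/
theorem involution_eq_prod_commuting_reflections
    {V : Type*} [NormedAddCommGroup V] [InnerProductSpace ℝ V] [FiniteDimensional ℝ V]
    (W : Subgroup (V ≃ₗᵢ[ℝ] V)) (hfin : Finite W)
    (S : Set (V ≃ₗᵢ[ℝ] V)) (hS : ∀ s ∈ S, IsOrthoReflection s)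
    (hgen : Subgroup.closure S = W)
    (g : V ≃ₗᵢ[ℝ] V) (hgW : g ∈ W) (hg : g ^ 2 = 1) :
    ∃ l : List (V ≃ₗᵢ[ℝ] V),
      (∀ s ∈ l, IsOrthoReflection s ∧ s ∈ W) ∧
      l.Pairwise (fun a b => Commute a b ∧ a ≠ b) ∧
      l.prod = g := by
  obtain ⟨l, h1, _, h3, h4⟩ := CarterAux.main_aux W hfin S
    (fun s hs => CarterAux.exists_isRefl_of_ortho (hS s hs)) hgen
    (Module.finrank ℝ (CarterAux.negSp g)) g hgW hg le_rfl
  exact ⟨l, h1, h3, h4⟩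
end

section
/- If g is an involution in a finite Coxeter group written as a product of n pairwise commuting reflections, then n equals the multiplicity of -1 as an eigenvalue of g in the geometric representation. -/
/-- The degree of an involution: the multiplicity of `-1` as an eigenvalue,
i.e. the dimension of the `(-1)`-eigenspace. -/
noncomputable def invDegree {V : Type*} [NormedAddCommGroup V] [InnerProductSpace ℝ V]
    (g : V ≃ₗᵢ[ℝ] V) : ℕ :=
  Module.finrank ℝ (Module.End.eigenspace (g.toLinearEquiv : V →ₗ[ℝ] V) (-1))

open RealInnerProductSpace

section Aux

variable {V : Type*} [NormedAddCommGroup V] [InnerProductSpace ℝ V]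

/-- The `(-1)`-eigenspace of an isometry. -/
noncomputable def negSpace (g : V ≃ₗᵢ[ℝ] V) : Submodule ℝ V :=
  Module.End.eigenspace (g.toLinearEquiv : V →ₗ[ℝ] V) (-1)

lemma mem_negSpace {g : V ≃ₗᵢ[ℝ] V} {x : V} : x ∈ negSpace g ↔ g x = -x := by
  rw [negSpace, Module.End.mem_eigenspace_iff]
  simp

lemma sq_one_apply {g : V ≃ₗᵢ[ℝ] V} (hg : g ^ 2 = 1) (x : V) : g (g x) = x := by
  have := congrArg (fun e : V ≃ₗᵢ[ℝ] V => e x) hg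
  simpa [pow_two] using this

/-- For an isometric involution, the `(-1)`-eigenspace is orthogonal to the fixed space. -/
lemma inner_eq_zero_of_neg_of_fixed {g : V ≃ₗᵢ[ℝ] V} {x y : V}
    (hx : g x = -x) (hy : g y = y) : (inner ℝ (x) (y) : ℝ) = 0 := by
  have h : (inner ℝ (x) (y) : ℝ) = -(inner ℝ (x) (y) : ℝ) := by
    conv_lhs => rw [← g.inner_map_map x y, hx, hy, inner_neg_left]
  linarith

/-- A vector orthogonal to the `(-1)`-eigenspace of an isometric involution is fixed. -/
lemma fixed_of_orthogonal {g : V ≃ₗᵢ[ℝ] V} (hg : g ^ 2 = 1) {x : V}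
    (h : ∀ v ∈ negSpace g, (inner ℝ (x) (v) : ℝ) = 0) : g x = x := by
  set b : V := (2⁻¹ : ℝ) • (x - g x) with hb
  set a : V := (2⁻¹ : ℝ) • (x + g x) with ha
  have hab : a + b = x := by
    rw [ha, hb, ← smul_add]
    rw [show x + g x + (x - g x) = (2 : ℝ) • x by module]
    rw [smul_smul]; norm_num
  have hbneg : g b = -b := by
    rw [hb, map_smul, map_sub, sq_one_apply hg, ← smul_neg]
    congr 1; abel
  have hafix : g a = a := by
    rw [ha, map_smul, map_add, sq_one_apply hg]
    congr 1; abel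
  have hbmem : b ∈ negSpace g := mem_negSpace.2 hbneg
  have h1 : (inner ℝ (x) (b) : ℝ) = 0 := h b hbmem
  have h2 : (inner ℝ (a) (b) : ℝ) = 0 := by
    rw [real_inner_comm]; exact inner_eq_zero_of_neg_of_fixed hbneg hafix
  have hbb : (inner ℝ (b) (b) : ℝ) = 0 := by
    have := h1
    rw [← hab, inner_add_left, h2, zero_add] at this
    exact this
  have hb0 : b = 0 := by
    have := inner_self_eq_zero (𝕜 := ℝ) (x := b)
    exact this.1 hbb
  have : g x = g a + g b := by rw [← map_add, hab]
  rw [this, hafix, hb0, map_zero, add_zero, ← hab, hb0, add_zero]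

/-- An orthogonal reflection is determined by its `(-1)`-line. -/
lemma reflection_ext {r s : V ≃ₗᵢ[ℝ] V} (hr : IsOrthoReflection r) (hs : IsOrthoReflection s)
    (h : negSpace r = negSpace s) : r = s := by
  ext x
  set b : V := (2⁻¹ : ℝ) • (x - r x) with hb
  set a : V := (2⁻¹ : ℝ) • (x + r x) with ha
  have hab : a + b = x := by
    rw [ha, hb, ← smul_add]
    rw [show x + r x + (x - r x) = (2 : ℝ) • x by module]
    rw [smul_smul]; norm_num
  have hbneg : r b = -b := by
    rw [hb, map_smul, map_sub, sq_one_apply hr.1, ← smul_neg]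
    congr 1; abel
  have hafix : r a = a := by
    rw [ha, map_smul, map_add, sq_one_apply hr.1]
    congr 1; abel
  have hbmem : b ∈ negSpace s := h ▸ mem_negSpace.2 hbneg
  have haperp : ∀ v ∈ negSpace s, (inner ℝ (a) (v) : ℝ) = 0 := by
    intro v hv
    rw [← h] at hv
    rw [real_inner_comm]
    exact inner_eq_zero_of_neg_of_fixed (mem_negSpace.1 hv) hafix
  have hsa : s a = a := fixed_of_orthogonal hs.1 haperp
  have hrx : r x = a - b := by
    rw [← hab, map_add, hafix, hbneg]; abel
  have hsx : s x = a - b := by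
    rw [← hab, map_add, hsa, mem_negSpace.1 hbmem]; abel
  rw [hrx, hsx]

variable [FiniteDimensional ℝ V]

/-- If `v` is a nonzero vector of the `(-1)`-line of a reflection, that line is its span. -/
lemma negSpace_eq_span {r : V ≃ₗᵢ[ℝ] V} (hr : IsOrthoReflection r) {v : V}
    (hv : v ∈ negSpace r) (hv0 : v ≠ 0) : negSpace r = (ℝ ∙ v) := by
  symm
  apply Submodule.eq_of_le_of_finrank_le
  · exact (Submodule.span_singleton_le_iff_mem v _).2 hv
  · rw [finrank_span_singleton hv0]
    exact le_of_eq hr.2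

/-- Commuting distinct reflections: one fixes the `(-1)`-line of the other. -/
lemma fixes_other_line {r s : V ≃ₗᵢ[ℝ] V} (hr : IsOrthoReflection r) (hs : IsOrthoReflection s)
    (hne : r ≠ s) (hc : Commute r s) {v : V} (hv : v ∈ negSpace s) : r v = v := by
  rcases eq_or_ne v 0 with rfl | hv0
  · exact map_zero r
  have hrv : r v ∈ negSpace s := by
    rw [mem_negSpace]
    have : s (r v) = r (s v) := by
      have := congrArg (fun e : V ≃ₗᵢ[ℝ] V => e v) hc.eq
      simpa using this.symm
    rw [this, mem_negSpace.1 hv, map_neg]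
  rw [negSpace_eq_span hs hv hv0, Submodule.mem_span_singleton] at hrv
  obtain ⟨c, hcv⟩ := hrv
  have hc2 : c * c = 1 := by
    have h1 : r (r v) = v := sq_one_apply hr.1 v
    rw [← hcv, map_smul, ← hcv, smul_smul] at h1
    by_contra hcc
    have : (c * c - 1) • v = 0 := by
      rw [sub_smul, one_smul, h1, sub_self]
    exact hv0 ((smul_eq_zero.1 this).resolve_left (sub_ne_zero.2 hcc))
  rcases mul_self_eq_one_iff.1 hc2 with rfl | rfl
  · rw [← hcv, one_smul]
  · exfalso
    apply hne
    apply reflection_ext hr hs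
    have hvr : v ∈ negSpace r := by
      rw [mem_negSpace, ← hcv, neg_one_smul]
    rw [negSpace_eq_span hr hvr hv0, negSpace_eq_span hs hv hv0]

/-- Commuting distinct reflections have orthogonal `(-1)`-lines. -/
lemma lines_orthogonal {r s : V ≃ₗᵢ[ℝ] V} (hr : IsOrthoReflection r) (hs : IsOrthoReflection s)
    (hne : r ≠ s) (hc : Commute r s) {u v : V} (hu : u ∈ negSpace r) (hv : v ∈ negSpace s) :
    (inner ℝ (u) (v) : ℝ) = 0 :=
  inner_eq_zero_of_neg_of_fixed (mem_negSpace.1 hu) (fixes_other_line hr hs hne hc hv)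

lemma list_prod_fixes {x : V} : ∀ (m : List (V ≃ₗᵢ[ℝ] V)), (∀ r ∈ m, r x = x) →
    m.prod x = x := by
  intro m
  induction m with
  | nil => intro _; rfl
  | cons a t ih =>
    intro h
    rw [List.prod_cons]
    have : (a * t.prod) x = a (t.prod x) := rfl
    rw [this, ih (fun r hr => h r (List.mem_cons_of_mem a hr)), h a (List.mem_cons_self)]

end Aux

/-- If an involution `g` of a finite Coxeter group (realized geometrically as a finite
orthogonal reflection group) is written as a product of `n` pairwise commuting distinct
reflections, then `n` is the multiplicity of `-1` as an eigenvalue of `g`. -/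
theorem length_eq_neg_one_eigenvalue_multiplicity
    {V : Type*} [NormedAddCommGroup V] [InnerProductSpace ℝ V] [FiniteDimensional ℝ V]
    (W : Subgroup (V ≃ₗᵢ[ℝ] V)) (hfin : Finite W)
    (S : Set (V ≃ₗᵢ[ℝ] V)) (hS : ∀ s ∈ S, IsOrthoReflection s)
    (hgen : Subgroup.closure S = W)
    (g : V ≃ₗᵢ[ℝ] V) (hgW : g ∈ W) (hg : g ^ 2 = 1)
    (n : ℕ) (l : List (V ≃ₗᵢ[ℝ] V)) (hlen : l.length = n)
    (hrefl : ∀ s ∈ l, IsOrthoReflection s ∧ s ∈ W)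
    (hcomm : l.Pairwise Commute) (hnd : l.Nodup)
    (hprod : l.prod = g) :
    invDegree g = n := by
  classical
  subst hlen hprod
  -- reflections
  have hlr : ∀ s ∈ l, IsOrthoReflection s := fun s hs => (hrefl s hs).1
  -- pick a nonzero vector in each (-1)-line
  have hpick : ∀ i : Fin l.length, ∃ u : V, u ∈ negSpace (l.get i) ∧ u ≠ 0 := by
    intro i
    apply Submodule.exists_mem_ne_zero_of_ne_bot
    intro hbot
    have := (hlr (l.get i) (l.get_mem i)).2
    rw [show Module.End.eigenspace ((l.get i).toLinearEquiv : V →ₗ[ℝ] V) (-1)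
        = negSpace (l.get i) from rfl, hbot] at this
    simp at this
  choose u hu hu0 using hpick
  -- distinctness
  have hinj : ∀ i j : Fin l.length, i ≠ j → l.get i ≠ l.get j := by
    intro i j hij
    rw [List.nodup_iff_injective_get] at hnd
    exact fun h => hij (hnd h)
  -- commuting
  have hcom : ∀ i j : Fin l.length, i ≠ j → Commute (l.get i) (l.get j) := by
    intro i j hij
    rcases lt_or_gt_of_ne hij with h | h
    · exact List.pairwise_iff_get.1 hcomm i j h
    · exact (List.pairwise_iff_get.1 hcomm j i h).symm
  -- orthogonality of the u's
  have horth : Pairwise fun i j : Fin l.length => (inner ℝ (u i) (u j) : ℝ) = 0 := by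
    intro i j hij
    exact lines_orthogonal (hlr _ (l.get_mem i)) (hlr _ (l.get_mem j))
      (hinj i j hij) (hcom i j hij) (hu i) (hu j)
  have hli : LinearIndependent ℝ u := linearIndependent_of_ne_zero_of_inner_eq_zero hu0 horth
  set K : Submodule ℝ V := Submodule.span ℝ (Set.range u) with hK
  -- each element of l other than l.get i fixes u i
  have hfixes : ∀ (i : Fin l.length) (r : V ≃ₗᵢ[ℝ] V), r ∈ l → r ≠ l.get i → r (u i) = u i := by
    intro i r hrl hne
    have hrrefl := hlr r hrl
    have hirefl := hlr _ (l.get_mem i)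
    -- commute: both in l, distinct
    have hcomm' : Commute r (l.get i) := by
      obtain ⟨j, hj⟩ := List.get_of_mem hrl
      subst hj
      have hij : j ≠ i := fun h => hne (by rw [h])
      exact hcom j i hij
    exact fixes_other_line hrrefl hirefl hne hcomm' (hu i)
  -- g negates each u i
  have hneg : ∀ i : Fin l.length, l.prod (u i) = -(u i) := by
    intro i
    have hmem : l.get i ∈ l := l.get_mem i
    have hperm : List.Perm l (l.get i :: l.erase (l.get i)) := List.perm_cons_erase hmem
    rw [hperm.prod_eq' hcomm, List.prod_cons]
    have h1 : (l.erase (l.get i)).prod (u i) = u i := by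
      apply list_prod_fixes
      intro r hr
      have hrl : r ∈ l := List.mem_of_mem_erase hr
      have hne : r ≠ l.get i := by
        intro h
        subst h
        have := List.count_pos_iff.2 hr
        rw [List.count_erase_self, List.count_eq_one_of_mem hnd hmem] at this
        omega
      exact hfixes i r hrl hne
    have : (l.get i * (l.erase (l.get i)).prod) (u i)
        = l.get i ((l.erase (l.get i)).prod (u i)) := rfl
    rw [this, h1, mem_negSpace.1 (hu i)]
  -- K ≤ negSpace l.prod
  have hKle : K ≤ negSpace l.prod := by
    rw [hK, Submodule.span_le]
    rintro _ ⟨i, rfl⟩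
    exact mem_negSpace.2 (hneg i)
  -- reverse inclusion
  have hle2 : negSpace l.prod ≤ K := by
    intro w hw
    set p : V := (K.orthogonalProjectionOnto w : V) with hp
    have hq : w - p ∈ Kᗮ := K.sub_starProjection_mem_orthogonal w
    -- each reflection fixes w - p
    have hfix : ∀ r ∈ l, r (w - p) = w - p := by
      intro r hrl
      obtain ⟨i, hi⟩ := List.get_of_mem hrl
      subst hi
      apply fixed_of_orthogonal (hlr _ hrl).1
      intro v hv
      rw [negSpace_eq_span (hlr _ hrl) (hu i) (hu0 i), Submodule.mem_span_singleton] at hv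
      obtain ⟨c, rfl⟩ := hv
      rw [real_inner_smul_right]
      have : u i ∈ K := Submodule.subset_span ⟨i, rfl⟩
      rw [real_inner_comm, (Submodule.mem_orthogonal K (w - p)).1 hq (u i) this, mul_zero]
    have hgq : l.prod (w - p) = w - p := list_prod_fixes l hfix
    have hgp : l.prod p = -p := mem_negSpace.1 (hKle (K.orthogonalProjectionOnto w).2)
    have hgw : l.prod w = -w := mem_negSpace.1 hw
    have hwp : w - p = 0 := by
      have h1 : l.prod (w - p) = -w + p := by rw [map_sub, hgw, hgp]; abel
      rw [hgq] at h1
      have h2 : (2 : ℝ) • (w - p) = 0 := by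
        rw [two_smul]
        nth_rewrite 1 [h1]
        abel
      simpa using (smul_eq_zero.1 h2).resolve_left (by norm_num)
    have : w = p := by rw [← sub_eq_zero]; exact hwp
    rw [this]
    exact (K.orthogonalProjectionOnto w).2
  have hEK : negSpace l.prod = K := le_antisymm hle2 hKle
  have : invDegree l.prod = Module.finrank ℝ K := by
    rw [invDegree, show Module.End.eigenspace ((l.prod).toLinearEquiv : V →ₗ[ℝ] V) (-1)
        = negSpace l.prod from rfl, hEK]
  rw [this, hK, finrank_span_eq_card hli, Fintype.card_fin]
end

section
/- Any two maximal sets of pairwise commuting reflections generating the same elementary abelian 2-subgroup C of a finite Coxeter group W determine the same subgroup, and the product of the reflections in such a set is the unique involution in C of maximal degree. -/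
section Aux
set_option linter.unusedSectionVars false

open Module
variable {V : Type*} [NormedAddCommGroup V] [InnerProductSpace ℝ V] [FiniteDimensional ℝ V]

lemma memEig {g : V ≃ₗᵢ[ℝ] V} {μ : ℝ} {x : V} :
    x ∈ Module.End.eigenspace ((g.toLinearEquiv : V →ₗ[ℝ] V)) μ ↔ g x = μ • x := by
  rw [Module.End.mem_eigenspace_iff]; rfl

lemma involApply {g : V ≃ₗᵢ[ℝ] V} (h : g ^ 2 = 1) (x : V) : g (g x) = x := by
  have := congrArg (fun f : V ≃ₗᵢ[ℝ] V => f x) h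
  simpa [pow_two] using this

lemma eigCompl (g : V ≃ₗᵢ[ℝ] V) (h : g ^ 2 = 1) :
    finrank ℝ (Module.End.eigenspace ((g.toLinearEquiv : V →ₗ[ℝ] V)) 1)
      + finrank ℝ (Module.End.eigenspace ((g.toLinearEquiv : V →ₗ[ℝ] V)) (-1))
      = finrank ℝ V := by
  apply Submodule.finrank_add_eq_of_isCompl
  constructor
  · rw [disjoint_iff, eq_bot_iff]
    intro x hx
    obtain ⟨h1, h2⟩ := Submodule.mem_inf.1 hx
    rw [memEig] at h1 h2
    have : (2 : ℝ) • x = 0 := by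
      have h3 := h1.symm.trans h2
      simp only [one_smul, neg_smul] at h3
      rw [two_smul]
      nth_rewrite 1 [h3]; abel
    have := (smul_eq_zero.1 this).resolve_left (by norm_num)
    simpa using this
  · rw [codisjoint_iff, eq_top_iff]
    intro x _
    refine Submodule.mem_sup.2 ⟨(2⁻¹ : ℝ) • (x + g x), Submodule.smul_mem _ _ ?_,
      (2⁻¹ : ℝ) • (x - g x), Submodule.smul_mem _ _ ?_, ?_⟩
    · rw [memEig, map_add, involApply h, one_smul]; abel
    · rw [memEig, map_sub, involApply h]
      rw [neg_smul, one_smul]; abel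
    · rw [← smul_add]
      have : x + g x + (x - g x) = (2 : ℝ) • x := by rw [two_smul]; abel
      rw [this, ← smul_assoc]; norm_num

section Cube

variable {n : ℕ} {s : Fin n → (V ≃ₗᵢ[ℝ] V)} {v : Fin n → V}

/-- For `i ≠ j`, the reflection `s j` fixes the root `v i`. -/
lemma fix_root (hrefl : ∀ i, IsOrthoReflection (s i)) (hcomm : ∀ i j, Commute (s i) (s j))
    (hroot : ∀ i, v i ≠ 0 ∧
      v i ∈ Module.End.eigenspace ((s i).toLinearEquiv : V →ₗ[ℝ] V) (-1))
    (hindep : LinearIndependent ℝ v) {i j : Fin n} (hij : i ≠ j) :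
    s j (v i) = v i := by
  have hvi := memEig.1 (hroot i).2
  -- s j (v i) lies in the (-1)-eigenspace of s i
  have hmem : s j (v i) ∈ Module.End.eigenspace ((s i).toLinearEquiv : V →ₗ[ℝ] V) (-1) := by
    rw [memEig]
    have : s i (s j (v i)) = s j (s i (v i)) := by
      have := congrArg (fun f : V ≃ₗᵢ[ℝ] V => f (v i)) (hcomm i j)
      simpa using this
    rw [this, hvi, map_smul]
  -- that eigenspace is spanned by v i
  have hspan : Module.End.eigenspace ((s i).toLinearEquiv : V →ₗ[ℝ] V) (-1)
      = Submodule.span ℝ {v i} := by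
    symm
    apply Submodule.eq_of_le_of_finrank_le
    · rw [Submodule.span_le, Set.singleton_subset_iff]; exact (hroot i).2
    · rw [(hrefl i).2, finrank_span_singleton (hroot i).1]
  rw [hspan, Submodule.mem_span_singleton] at hmem
  obtain ⟨c, hc⟩ := hmem
  -- c ^ 2 = 1
  have hc2 : c * c = 1 := by
    have h1 : v i = (c * c) • v i := by
      conv_lhs => rw [← involApply (hrefl j).1 (v i), ← hc, map_smul, ← hc, smul_smul]
    have h2 : (1 - c * c) • v i = 0 := by
      rw [sub_smul, one_smul, ← h1, sub_self]
    rcases smul_eq_zero.1 h2 with h | h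
    · nlinarith [h]
    · exact absurd h (hroot i).1
  rcases mul_self_eq_one_iff.1 hc2 with rfl | rfl
  · rw [← hc, one_smul]
  -- c = -1 is impossible: v i would be in the (-1)-eigenspace of s j
  · exfalso
    have hvmem : v i ∈ Module.End.eigenspace ((s j).toLinearEquiv : V →ₗ[ℝ] V) (-1) := by
      rw [memEig, ← hc]
    have hspanj : Module.End.eigenspace ((s j).toLinearEquiv : V →ₗ[ℝ] V) (-1)
        = Submodule.span ℝ {v j} := by
      symm
      apply Submodule.eq_of_le_of_finrank_le
      · rw [Submodule.span_le, Set.singleton_subset_iff]; exact (hroot j).2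
      · rw [(hrefl j).2, finrank_span_singleton (hroot j).1]
    rw [hspanj, Submodule.mem_span_singleton] at hvmem
    obtain ⟨a, ha⟩ := hvmem
    have hpair : LinearIndependent ℝ ![v i, v j] := by
      have hinj : Function.Injective ![i, j] := by
        intro a b hab
        fin_cases a <;> fin_cases b <;> simp_all [hij, hij.symm]
      have := hindep.comp ![i, j] hinj
      convert this using 1
      ext a; fin_cases a <;> rfl
    rw [LinearIndependent.pair_iff] at hpair
    have := (hpair 1 (-a) (by rw [one_smul, neg_smul, ← ha]; abel)).1
    norm_num at this

lemma pc (hcomm : ∀ i j, Commute (s i) (s j)) (S : Finset (Fin n)) :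
    (↑S : Set (Fin n)).Pairwise (Function.onFun Commute s) := fun a _ b _ _ => hcomm a b

lemma nc_mul_self (hrefl : ∀ i, IsOrthoReflection (s i)) (hcomm : ∀ i j, Commute (s i) (s j))
    (S : Finset (Fin n)) :
    S.noncommProd s (pc hcomm S) * S.noncommProd s (pc hcomm S) = 1 := by
  classical
  induction S using Finset.induction_on with
  | empty => simp
  | @insert j T hj ih =>
    rw [Finset.noncommProd_insert_of_notMem _ _ _ _ hj]
    have hcj : Commute (T.noncommProd s (pc hcomm T)) (s j) :=
      (Finset.noncommProd_commute _ _ _ _ (fun x _ => hcomm j x)).symm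
    rw [Commute.mul_mul_mul_comm hcj, ih]
    have := (hrefl j).1
    rw [pow_two] at this
    rw [this, mul_one]

lemma nc_fix (hrefl : ∀ i, IsOrthoReflection (s i)) (hcomm : ∀ i j, Commute (s i) (s j))
    (hroot : ∀ i, v i ≠ 0 ∧
      v i ∈ Module.End.eigenspace ((s i).toLinearEquiv : V →ₗ[ℝ] V) (-1))
    (hindep : LinearIndependent ℝ v)
    (S : Finset (Fin n)) {i : Fin n} (hi : i ∉ S) :
    S.noncommProd s (pc hcomm S) (v i) = v i := by
  classical
  induction S using Finset.induction_on with
  | empty => simp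
  | @insert j T hj ih =>
    rw [Finset.noncommProd_insert_of_notMem _ _ _ _ hj, LinearIsometryEquiv.coe_mul,
      Function.comp_apply, ih (fun h => hi (Finset.mem_insert_of_mem h)),
      fix_root hrefl hcomm hroot hindep (by rintro rfl; exact hi (Finset.mem_insert_self _ _))]

lemma nc_neg (hrefl : ∀ i, IsOrthoReflection (s i)) (hcomm : ∀ i j, Commute (s i) (s j))
    (hroot : ∀ i, v i ≠ 0 ∧
      v i ∈ Module.End.eigenspace ((s i).toLinearEquiv : V →ₗ[ℝ] V) (-1))
    (hindep : LinearIndependent ℝ v)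
    (S : Finset (Fin n)) {i : Fin n} (hi : i ∈ S) :
    S.noncommProd s (pc hcomm S) (v i) = -(v i) := by
  classical
  induction S using Finset.induction_on with
  | empty => simp at hi
  | @insert j T hj ih =>
    rw [Finset.noncommProd_insert_of_notMem _ _ _ _ hj, LinearIsometryEquiv.coe_mul,
      Function.comp_apply]
    rcases Finset.mem_insert.1 hi with rfl | hiT
    · rw [nc_fix hrefl hcomm hroot hindep T hj]
      have := memEig.1 (hroot i).2
      rw [this, neg_smul, one_smul]
    · rw [ih hiT, map_neg,
        fix_root hrefl hcomm hroot hindep (by rintro rfl; exact hj hiT)]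

lemma nc_symmDiff (hrefl : ∀ i, IsOrthoReflection (s i)) (hcomm : ∀ i j, Commute (s i) (s j))
    (A B : Finset (Fin n)) :
    A.noncommProd s (pc hcomm A) * B.noncommProd s (pc hcomm B)
      = (symmDiff A B).noncommProd s (pc hcomm _) := by
  classical
  have hA : A = (A \ B) ∪ (A ∩ B) := (Finset.sdiff_union_inter A B).symm
  have hB : B = (A ∩ B) ∪ (B \ A) := by
    ext x
    simp only [Finset.mem_union, Finset.mem_inter, Finset.mem_sdiff]
    tauto
  have hD : symmDiff A B = (A \ B) ∪ (B \ A) := by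
    ext x
    simp only [Finset.mem_symmDiff, Finset.mem_union, Finset.mem_sdiff]
  have d1 : Disjoint (A \ B) (A ∩ B) := by
    rw [Finset.disjoint_left]; intro a ha hb; simp at ha hb; tauto
  have d2 : Disjoint (A ∩ B) (B \ A) := by
    rw [Finset.disjoint_left]; intro a ha hb; simp at ha hb; tauto
  have d3 : Disjoint (A \ B) (B \ A) := by
    rw [Finset.disjoint_left]; intro a ha hb; simp at ha hb; tauto
  have e1 : A.noncommProd s (pc hcomm A)
      = (A \ B).noncommProd s (pc hcomm _) * (A ∩ B).noncommProd s (pc hcomm _) := by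
    rw [Finset.noncommProd_congr hA (fun x _ => rfl) (pc hcomm _)]
    exact Finset.noncommProd_union_of_disjoint d1 _ _
  have e2 : B.noncommProd s (pc hcomm B)
      = (A ∩ B).noncommProd s (pc hcomm _) * (B \ A).noncommProd s (pc hcomm _) := by
    rw [Finset.noncommProd_congr hB (fun x _ => rfl) (pc hcomm _)]
    exact Finset.noncommProd_union_of_disjoint d2 _ _
  have e3 : (symmDiff A B).noncommProd s (pc hcomm _)
      = (A \ B).noncommProd s (pc hcomm _) * (B \ A).noncommProd s (pc hcomm _) := by
    rw [Finset.noncommProd_congr hD (fun x _ => rfl) (pc hcomm _)]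
    exact Finset.noncommProd_union_of_disjoint d3 _ _
  rw [e1, e2, e3, mul_assoc, ← mul_assoc ((A ∩ B).noncommProd s (pc hcomm _)),
    nc_mul_self hrefl hcomm, one_mul]

lemma nc_repr (hrefl : ∀ i, IsOrthoReflection (s i)) (hcomm : ∀ i j, Commute (s i) (s j))
    {x : V ≃ₗᵢ[ℝ] V} (hx : x ∈ Subgroup.closure (Set.range s)) :
    ∃ S : Finset (Fin n), x = S.noncommProd s (pc hcomm S) := by
  classical
  induction hx using Subgroup.closure_induction with
  | mem y hy =>
    obtain ⟨i, rfl⟩ := hy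
    exact ⟨{i}, by simp⟩
  | one => exact ⟨∅, by simp⟩
  | mul a b _ _ iha ihb =>
    obtain ⟨A, rfl⟩ := iha
    obtain ⟨B, rfl⟩ := ihb
    exact ⟨symmDiff A B, nc_symmDiff hrefl hcomm A B⟩
  | inv a _ iha =>
    obtain ⟨A, rfl⟩ := iha
    exact ⟨A, inv_eq_of_mul_eq_one_right (nc_mul_self hrefl hcomm A)⟩

lemma ofFn_eq_nc (hcomm : ∀ i j, Commute (s i) (s j)) :
    (List.ofFn s).prod = Finset.univ.noncommProd s (pc hcomm _) := by
  rw [List.ofFn_eq_map]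
  unfold Finset.noncommProd
  rw [Fin.univ_def]
  simp only [Multiset.map_coe]
  rw [Multiset.noncommProd_coe]

lemma fix_card (hrefl : ∀ i, IsOrthoReflection (s i)) (hcomm : ∀ i j, Commute (s i) (s j))
    (S : Finset (Fin n)) :
    finrank ℝ V ≤ finrank ℝ (Module.End.eigenspace
      (((S.noncommProd s (pc hcomm S)).toLinearEquiv : V →ₗ[ℝ] V)) 1) + S.card := by
  classical
  induction S using Finset.induction_on with
  | empty =>
    have : Module.End.eigenspace ((((∅ : Finset (Fin n)).noncommProd s
        (pc hcomm ∅)).toLinearEquiv : V →ₗ[ℝ] V)) 1 = ⊤ := by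
      rw [eq_top_iff]
      intro x _
      rw [memEig]
      simp
    rw [this]
    simp [finrank_top]
  | @insert j T hj ih =>
    set A := Module.End.eigenspace (((s j).toLinearEquiv : V →ₗ[ℝ] V)) 1 with hAdef
    set B := Module.End.eigenspace (((T.noncommProd s (pc hcomm T)).toLinearEquiv
      : V →ₗ[ℝ] V)) 1 with hBdef
    have hsub : A ⊓ B ≤ Module.End.eigenspace
        ((((insert j T).noncommProd s (pc hcomm _)).toLinearEquiv : V →ₗ[ℝ] V)) 1 := by
      intro x hx
      obtain ⟨ha, hb⟩ := Submodule.mem_inf.1 hx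
      rw [hAdef, memEig, one_smul] at ha
      rw [hBdef, memEig, one_smul] at hb
      rw [memEig, one_smul, Finset.noncommProd_insert_of_notMem _ _ _ _ hj,
        LinearIsometryEquiv.coe_mul, Function.comp_apply, hb, ha]
    have h1 : finrank ℝ ↥(A ⊔ B) + finrank ℝ ↥(A ⊓ B) = finrank ℝ ↥A + finrank ℝ ↥B :=
      Submodule.finrank_sup_add_finrank_inf_eq A B
    have h2 : finrank ℝ ↥(A ⊔ B) ≤ finrank ℝ V := Submodule.finrank_le _
    have h3 : finrank ℝ ↥A + 1 = finrank ℝ V := by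
      have := eigCompl (s j) (hrefl j).1
      rw [(hrefl j).2] at this
      exact this
    have h4 := Submodule.finrank_mono hsub
    have h5 : (insert j T).card = T.card + 1 := Finset.card_insert_of_notMem hj
    omega

lemma deg_le (hrefl : ∀ i, IsOrthoReflection (s i)) (hcomm : ∀ i j, Commute (s i) (s j))
    (S : Finset (Fin n)) :
    invDegree (S.noncommProd s (pc hcomm S)) ≤ S.card := by
  have hsq : (S.noncommProd s (pc hcomm S)) ^ 2 = 1 := by
    rw [pow_two]; exact nc_mul_self hrefl hcomm S
  have h1 := eigCompl _ hsq
  have h2 := fix_card hrefl hcomm S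
  unfold invDegree
  omega

lemma deg_ge (hrefl : ∀ i, IsOrthoReflection (s i)) (hcomm : ∀ i j, Commute (s i) (s j))
    (hroot : ∀ i, v i ≠ 0 ∧
      v i ∈ Module.End.eigenspace ((s i).toLinearEquiv : V →ₗ[ℝ] V) (-1))
    (hindep : LinearIndependent ℝ v)
    (S : Finset (Fin n)) :
    S.card ≤ invDegree (S.noncommProd s (pc hcomm S)) := by
  have hli : LinearIndependent ℝ (fun i : ↥S => v i) :=
    hindep.comp _ Subtype.val_injective
  have hsub : Set.range (fun i : ↥S => v i) ⊆ (Module.End.eigenspace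
      (((S.noncommProd s (pc hcomm S)).toLinearEquiv : V →ₗ[ℝ] V)) (-1) : Set V) := by
    rintro _ ⟨i, rfl⟩
    apply memEig.2
    rw [nc_neg hrefl hcomm hroot hindep S i.2, neg_smul, one_smul]
  calc S.card = Fintype.card ↥S := (Fintype.card_coe S).symm
    _ = finrank ℝ (Submodule.span ℝ (Set.range (fun i : ↥S => v i))) :=
        (finrank_span_eq_card hli).symm
    _ ≤ _ := Submodule.finrank_mono (Submodule.span_le.2 hsub)

end Cube

end Aux

/-- Let `C` be a "cube": the subgroup generated by pairwise commuting reflections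
`s 1, …, s n` whose root lines are linearly independent. Then the product
`s 1 ⋯ s n` has degree `n`, and every other element of `C` has degree `< n`;
in particular the product of the generating reflections is the unique involution
of `C` of maximal degree, independently of the chosen generating set of
commuting reflections. -/
theorem cube_top_element_unique_max_degree
    {V : Type*} [NormedAddCommGroup V] [InnerProductSpace ℝ V] [FiniteDimensional ℝ V]
    (n : ℕ) (s : Fin n → (V ≃ₗᵢ[ℝ] V))
    (hrefl : ∀ i, IsOrthoReflection (s i))
    (hcomm : ∀ i j, Commute (s i) (s j))
    (v : Fin n → V)
    (hroot : ∀ i, v i ≠ 0 ∧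
      v i ∈ Module.End.eigenspace ((s i).toLinearEquiv : V →ₗ[ℝ] V) (-1))
    (hindep : LinearIndependent ℝ v) :
    invDegree (List.ofFn s).prod = n ∧
    ∀ x ∈ Subgroup.closure (Set.range s),
      x ≠ (List.ofFn s).prod → invDegree x < n := by
  have hofn := ofFn_eq_nc (s := s) hcomm
  constructor
  · rw [hofn]
    have h1 := deg_le hrefl hcomm (Finset.univ : Finset (Fin n))
    have h2 := deg_ge hrefl hcomm hroot hindep (Finset.univ : Finset (Fin n))
    have hcard : (Finset.univ : Finset (Fin n)).card = n := by simp
    omega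
  · intro x hx hne
    obtain ⟨S, rfl⟩ := nc_repr hrefl hcomm hx
    have hS : S ≠ Finset.univ := by
      rintro rfl
      exact hne hofn.symm
    have hlt : S.card < n := by
      have h1 : S.card ≤ n := by simpa using Finset.card_le_univ S
      rcases lt_or_eq_of_le h1 with h | h
      · exact h
      · exfalso
        exact hS (Finset.eq_univ_of_card S (by simpa using h))
    exact lt_of_le_of_lt (deg_le hrefl hcomm S) hlt
end
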